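/- For the composite Lyapunov function V = (1/2) s^T m̄ s + (1/2)(σ̂ − σ_m)², the closed-loop dynamics m̄ ṡ = −Λ s + σ − σ̂ (s/||s||) with ||σ|| ≤ σ_m and adaptive law σ̂' = ||s|| − ν σ̂ yield V̇ ≤ −λ_min(Λ)||s||² − (ν/2)((σ̂ − σ_m)² − σ_m²) whenever s ≠ 0. -/

import Mathlib

open Matrix

local notation "⟪" x ", " y "⟫" => @inner ℝ _ _ x y

lemma rayleigh_lower (Λ : Matrix (Fin 3) (Fin 3) ℝ) (hΛ : Λ.PosDef)
    (x : EuclideanSpace ℝ (Fin 3)) :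
    (⨅ i, hΛ.1.eigenvalues i) * ‖x‖ ^ 2 ≤ ⟪Matrix.toEuclideanLin Λ x, x⟫ := by
  set b := hΛ.1.eigenvectorBasis with hbdef
  have hsym := Matrix.isHermitian_iff_isSymmetric.1 hΛ.1
  have hb : ∀ i, Matrix.toEuclideanLin Λ (b i) = hΛ.1.eigenvalues i • b i := by
    intro i
    ext j
    have := congrFun (hΛ.1.mulVec_eigenvectorBasis i) j
    simpa [Matrix.toEuclideanLin_apply] using this
  have h1 : ⟪Matrix.toEuclideanLin Λ x, x⟫
      = ∑ i, hΛ.1.eigenvalues i * ⟪b i, x⟫ ^ 2 := by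
    rw [← b.sum_inner_mul_inner (Matrix.toEuclideanLin Λ x) x]
    refine Finset.sum_congr rfl fun i _ => ?_
    have : ⟪Matrix.toEuclideanLin Λ x, b i⟫ = hΛ.1.eigenvalues i * ⟪b i, x⟫ := by
      rw [hsym x (b i), hb i, real_inner_smul_right, real_inner_comm]
    rw [this]; ring
  have h2 : ‖x‖ ^ 2 = ∑ i, ⟪b i, x⟫ ^ 2 := by
    rw [← real_inner_self_eq_norm_sq, ← b.sum_inner_mul_inner x x]
    refine Finset.sum_congr rfl fun i _ => ?_
    rw [real_inner_comm]; ring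
  rw [h1, h2, Finset.mul_sum]
  refine Finset.sum_le_sum fun i _ => ?_
  exact mul_le_mul_of_nonneg_right (ciInf_le (Set.Finite.bddBelow (Set.finite_range _)) i)
    (sq_nonneg _)

theorem composite_lyapunov_derivative_bound
    (s σ : ℝ → EuclideanSpace ℝ (Fin 3)) (hs : Differentiable ℝ s)
    (Λ : Matrix (Fin 3) (Fin 3) ℝ) (hΛ : Λ.PosDef)
    (m σ_m ν : ℝ) (hm : 0 < m) (hν : 0 < ν) (hσ : ∀ t, ‖σ t‖ ≤ σ_m)
    (σhat : ℝ → ℝ) (hσd : Differentiable ℝ σhat)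
    (hdyn : ∀ t, m • deriv s t
      = -Matrix.toEuclideanLin Λ (s t) + σ t - (σhat t / ‖s t‖) • s t)
    (hadapt : ∀ t, deriv σhat t = ‖s t‖ - ν * σhat t)
    (V : ℝ → ℝ)
    (hV : ∀ t, V t = (1 / 2) * m * ‖s t‖ ^ 2 + (1 / 2) * (σhat t - σ_m) ^ 2) :
    ∀ t, s t ≠ 0 →
      deriv V t ≤ -(⨅ i, hΛ.1.eigenvalues i) * ‖s t‖ ^ 2
        - (ν / 2) * ((σhat t - σ_m) ^ 2 - σ_m ^ 2) := by
  intro t hst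
  -- derivative of V
  have hVfun : V = fun t => (1 / 2) * m * ⟪s t, s t⟫ + (1 / 2) * (σhat t - σ_m) ^ 2 := by
    funext u
    rw [hV u, real_inner_self_eq_norm_sq]
  have hds : HasDerivAt s (deriv s t) t := (hs t).hasDerivAt
  have hdσ : HasDerivAt σhat (deriv σhat t) t := (hσd t).hasDerivAt
  have hinner : HasDerivAt (fun u => ⟪s u, s u⟫)
      (⟪s t, deriv s t⟫ + ⟪deriv s t, s t⟫) t := hds.inner ℝ hds
  have hV' : HasDerivAt V
      ((1 / 2) * m * (⟪s t, deriv s t⟫ + ⟪deriv s t, s t⟫)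
        + (1 / 2) * (2 * (σhat t - σ_m) * deriv σhat t)) t := by
    rw [hVfun]
    have h2 : HasDerivAt (fun u => (σhat u - σ_m) ^ 2)
        (2 * (σhat t - σ_m) ^ 1 * deriv σhat t) t := by
      exact ((hdσ.sub_const σ_m).pow 2)
    refine HasDerivAt.congr_deriv ((hinner.const_mul ((1:ℝ) / 2 * m)).add (h2.const_mul ((1:ℝ)/2))) ?_
    ring
  rw [hV'.deriv]
  have hcomm : ⟪s t, deriv s t⟫ = ⟪deriv s t, s t⟫ := real_inner_comm _ _
  -- compute m * ⟪deriv s t, s t⟫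
  have hmd : m * ⟪deriv s t, s t⟫
      = -⟪Matrix.toEuclideanLin Λ (s t), s t⟫ + ⟪σ t, s t⟫ - σhat t * ‖s t‖ := by
    have h1 : ⟪m • deriv s t, s t⟫ = m * ⟪deriv s t, s t⟫ := real_inner_smul_left _ _ _
    rw [← h1, hdyn t]
    have hns : ‖s t‖ ≠ 0 := norm_ne_zero_iff.2 hst
    rw [inner_sub_left, inner_add_left, inner_neg_left, real_inner_smul_left,
      real_inner_self_eq_norm_sq]
    field_simp
  have key : (1 / 2) * m * (⟪s t, deriv s t⟫ + ⟪deriv s t, s t⟫)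
        + (1 / 2) * (2 * (σhat t - σ_m) * deriv σhat t)
      = -⟪Matrix.toEuclideanLin Λ (s t), s t⟫ + (⟪σ t, s t⟫ - σ_m * ‖s t‖)
        - ν * (σhat t - σ_m) * σhat t := by
    rw [hcomm, hadapt t]
    have : (1:ℝ) / 2 * m * (⟪deriv s t, s t⟫ + ⟪deriv s t, s t⟫)
        = m * ⟪deriv s t, s t⟫ := by ring
    rw [this, hmd]
    ring
  rw [key]
  have hray := rayleigh_lower Λ hΛ (s t)
  have hcs : ⟪σ t, s t⟫ - σ_m * ‖s t‖ ≤ 0 := by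
    have := real_inner_le_norm (σ t) (s t)
    nlinarith [hσ t, norm_nonneg (s t)]
  have hadaptb : -(ν * (σhat t - σ_m) * σhat t)
      ≤ -(ν / 2) * ((σhat t - σ_m) ^ 2 - σ_m ^ 2) := by
    nlinarith [sq_nonneg (σhat t - σ_m + σ_m), sq_nonneg (σhat t - σ_m - σ_m), hν.le]
  linarith
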